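/- With Sh(c, φ) = 2c − 2b(c,φ) − a(c,φ) as in the shortening procedure, for each fixed φ ∈ (0, 2π/3), Sh(c, φ) is a strictly increasing function of c > 0. -/

import Mathlib

open Real

set_option maxHeartbeats 1000000 in
lemma sh_deriv_pos_aux (k m u v w : ℝ) (hk0 : 0 < k) (hk1 : k < 1)
    (hm0 : 0 < m) (hm2 : m ^ 2 = 1 - 3 * k ^ 2 / 4)
    (hu : 0 < u) (hv : 0 < v) (hv2 : v ^ 2 = u ^ 2 + 1)
    (hw0 : 0 < w) (hw2 : w ^ 2 = 1 + (k * u) ^ 2) :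
    0 < 2 - 2 * (w⁻¹ * (k * v)) - (u + m * v) / (v + m * u)
      + ((k * u) * (k * v) / w + k * v / 2) / (w + k * u / 2) := by
  have hmhalf : 1 / 2 < m := by nlinarith
  have hm1 : m < 1 := by nlinarith
  have hwkv : k * v < w := by
    have h1 : (k * v) ^ 2 < w ^ 2 := by nlinarith
    exact lt_of_pow_lt_pow_left₀ 2 hw0.le h1
  have hwv : k * u ^ 2 + 1 ≤ w * v := by
    have h1 : (k * u ^ 2 + 1) ^ 2 ≤ (w * v) ^ 2 := by nlinarith [sq_nonneg (u * (1 - k))]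
    exact le_of_pow_le_pow_left₀ two_ne_zero (by positivity) h1
  have hC : 0 < 4 - 2 * m - 3 * k := by
    have h : (2 * m) ^ 2 < (4 - 3 * k) ^ 2 := by
      nlinarith [mul_pos (sub_pos.2 hk1) (sub_pos.2 hk1)]
    have := lt_of_pow_lt_pow_left₀ 2 (by linarith : (0:ℝ) ≤ 4 - 3 * k) h
    linarith
  have h2wku : 0 < 2 * w + k * u := by positivity
  have hvmu : 0 < v + m * u := by positivity
  have hwku2 : 0 < w + k * u / 2 := by positivity
  have heq : 2 - 2 * (w⁻¹ * (k * v)) - (u + m * v) / (v + m * u)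
      + ((k * u) * (k * v) / w + k * v / 2) / (w + k * u / 2)
      = 2 - 3 * k * v / (2 * w + k * u) - (u + m * v) / (v + m * u) := by
    field_simp
    ring
  rw [heq]
  have hv2k : k * v ^ 2 = k * (u ^ 2 + 1) := by rw [hv2]
  have hE : 3 * k * v * (v + m * u) + (u + m * v) * (2 * w + k * u)
      < 2 * ((2 * w + k * u) * (v + m * u)) := by
    nlinarith [mul_nonneg (by linarith : (0:ℝ) ≤ 2 - m) (by linarith : (0:ℝ) ≤ w * v - (k * u ^ 2 + 1)),
      mul_pos (by linarith : (0:ℝ) < 2 * m - 1) (mul_pos hu (sub_pos.2 hwkv)), hC, hv2k]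
  have h1 : 3 * k * v / (2 * w + k * u) + (u + m * v) / (v + m * u) < 2 := by
    rw [div_add_div _ _ h2wku.ne' hvmu.ne', div_lt_iff₀ (mul_pos h2wku hvmu)]
    linarith [hE]
  linarith

lemma sh_law_aux (k m u v w : ℝ) (hv2 : v ^ 2 = u ^ 2 + 1)
    (hw2 : w ^ 2 = 1 + (k * u) ^ 2) (hm2 : m ^ 2 = 1 - 3 * k ^ 2 / 4)
    (hN0 : 0 < v + m * u) (hP0 : 0 < w + k * u / 2) :
    Real.cosh (Real.log ((v + m * u) / (w + k * u / 2))) * w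
      + (1 / 2) * Real.sinh (Real.log ((v + m * u) / (w + k * u / 2))) * (k * u) = v := by
  have hX0 : 0 < (v + m * u) / (w + k * u / 2) := div_pos hN0 hP0
  have key : (v + m * u) ^ 2 + (w ^ 2 - (k * u) ^ 2 / 4) = 2 * v * (v + m * u) := by
    linear_combination (-1 : ℝ) * hv2 + u ^ 2 * hm2 + hw2
  have hXP : (v + m * u) / (w + k * u / 2) * (w + k * u / 2) = v + m * u :=
    div_mul_cancel₀ _ hP0.ne'
  have hXinv : ((v + m * u) / (w + k * u / 2))⁻¹ = (w + k * u / 2) / (v + m * u) := by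
    rw [inv_div]
  rw [Real.cosh_log hX0, Real.sinh_log hX0]
  set X : ℝ := (v + m * u) / (w + k * u / 2) with hXdef
  calc (X + X⁻¹) / 2 * w + 1 / 2 * ((X - X⁻¹) / 2) * (k * u)
      = (X * (w + k * u / 2) + X⁻¹ * (w - k * u / 2)) / 2 := by ring
    _ = ((v + m * u) + (w + k * u / 2) / (v + m * u) * (w - k * u / 2)) / 2 := by
        rw [hXinv, hXP]
    _ = ((v + m * u) ^ 2 + (w ^ 2 - (k * u) ^ 2 / 4)) / (2 * (v + m * u)) := by
        field_simp
        ring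
    _ = 2 * v * (v + m * u) / (2 * (v + m * u)) := by rw [key]
    _ = v := by
        field_simp

set_option maxHeartbeats 1000000 in
lemma sh_strictMono_aux (k m : ℝ) (hk0 : 0 < k) (hk1 : k < 1)
    (hm0 : 0 < m) (hm2 : m ^ 2 = 1 - 3 * k ^ 2 / 4) :
    StrictMonoOn (fun c : ℝ => 2 * c - 2 * Real.arsinh (k * Real.sinh c)
      - Real.log (Real.cosh c + m * Real.sinh c)
      + Real.log (Real.sqrt (1 + (k * Real.sinh c) ^ 2) + k * Real.sinh c / 2)) (Set.Ioi 0) := by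
  have hmhalf : 1 / 2 < m := by nlinarith
  have hm1 : m < 1 := by nlinarith
  have habs : ∀ x : ℝ, |Real.sinh x| < Real.cosh x := fun x => by
    have h1 := Real.cosh_sq x
    have h2 := Real.cosh_pos x
    have h3 := sq_abs (Real.sinh x)
    nlinarith [abs_nonneg (Real.sinh x)]
  have hden1 : ∀ x : ℝ, 0 < Real.cosh x + m * Real.sinh x := fun x => by
    have h1 := habs x
    have h2 : -(|Real.sinh x|) ≤ Real.sinh x := neg_abs_le _
    nlinarith [abs_nonneg (Real.sinh x)]
  have hw0 : ∀ x : ℝ, 0 < Real.sqrt (1 + (k * Real.sinh x) ^ 2) := fun x =>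
    Real.sqrt_pos.2 (by positivity)
  have hkuw : ∀ x : ℝ, |k * Real.sinh x| < Real.sqrt (1 + (k * Real.sinh x) ^ 2) := fun x => by
    rw [show |k * Real.sinh x| = Real.sqrt (|k * Real.sinh x| ^ 2) from
      (Real.sqrt_sq (abs_nonneg _)).symm]
    apply Real.sqrt_lt_sqrt (sq_nonneg _)
    rw [sq_abs]
    linarith
  have hden2 : ∀ x : ℝ, 0 < Real.sqrt (1 + (k * Real.sinh x) ^ 2) + k * Real.sinh x / 2 :=
    fun x => by
      have h1 := hkuw x
      have h2 : -(|k * Real.sinh x|) ≤ k * Real.sinh x := neg_abs_le _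
      have h3 := abs_nonneg (k * Real.sinh x)
      linarith
  have hd : ∀ x : ℝ, HasDerivAt (fun c : ℝ => 2 * c - 2 * Real.arsinh (k * Real.sinh c)
      - Real.log (Real.cosh c + m * Real.sinh c)
      + Real.log (Real.sqrt (1 + (k * Real.sinh c) ^ 2) + k * Real.sinh c / 2))
      (2 * 1 - 2 * ((Real.sqrt (1 + (k * Real.sinh x) ^ 2))⁻¹ * (k * Real.cosh x))
        - (Real.sinh x + m * Real.cosh x) / (Real.cosh x + m * Real.sinh x)
        + (2 * (k * Real.sinh x) * (k * Real.cosh x) / (2 * Real.sqrt (1 + (k * Real.sinh x) ^ 2))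
            + k * Real.cosh x / 2)
          / (Real.sqrt (1 + (k * Real.sinh x) ^ 2) + k * Real.sinh x / 2)) x := by
    intro x
    have hks : HasDerivAt (fun c : ℝ => k * Real.sinh c) (k * Real.cosh x) x :=
      (Real.hasDerivAt_sinh x).const_mul k
    have h2 : HasDerivAt (fun c : ℝ => Real.arsinh (k * Real.sinh c))
        ((Real.sqrt (1 + (k * Real.sinh x) ^ 2))⁻¹ * (k * Real.cosh x)) x :=
      (Real.hasDerivAt_arsinh _).comp x hks
    have h3 : HasDerivAt (fun c : ℝ => Real.cosh c + m * Real.sinh c)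
        (Real.sinh x + m * Real.cosh x) x :=
      (Real.hasDerivAt_cosh x).add ((Real.hasDerivAt_sinh x).const_mul m)
    have h3l := h3.log (hden1 x).ne'
    have h4 : HasDerivAt (fun c : ℝ => 1 + (k * Real.sinh c) ^ 2)
        (2 * (k * Real.sinh x) * (k * Real.cosh x)) x := by
      have h := (hks.pow 2).const_add 1
      simp only [Pi.pow_apply] at h
      refine h.congr_deriv ?_
      push_cast
      ring
    have h5 := (h4.sqrt (by positivity)).add (hks.div_const 2)
    have h5l := h5.log (hden2 x).ne'
    exact ((((hasDerivAt_id x).const_mul 2).sub (h2.const_mul 2)).sub h3l).add h5l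
  apply strictMonoOn_of_deriv_pos (convex_Ioi 0)
  · exact fun x _ => (hd x).continuousAt.continuousWithinAt
  · intro x hx
    rw [interior_Ioi] at hx
    rw [(hd x).deriv]
    have hu : 0 < Real.sinh x := by rwa [Real.sinh_pos_iff]
    have h := sh_deriv_pos_aux k m (Real.sinh x) (Real.cosh x)
      (Real.sqrt (1 + (k * Real.sinh x) ^ 2))
      hk0 hk1 hm0 hm2 hu (Real.cosh_pos x) (Real.cosh_sq x) (hw0 x)
      (Real.sq_sqrt (by positivity))
    have heq2 : 2 * (k * Real.sinh x) * (k * Real.cosh x)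
        / (2 * Real.sqrt (1 + (k * Real.sinh x) ^ 2))
        = (k * Real.sinh x) * (k * Real.cosh x) / Real.sqrt (1 + (k * Real.sinh x) ^ 2) := by
      have hwne := (hw0 x).ne'
      field_simp
    rw [heq2, mul_one]
    exact h

set_option maxHeartbeats 1000000 in
/-- With `Sh(c,φ) = 2c - 2 b(c,φ) - a(c,φ)` the savings of the shortening procedure,
where `a` and `b` are determined (for fixed angle `φ ∈ (0, 2π/3)`) by the hyperbolic
law of cosines `cosh c = cosh a * cosh b + (1/2) * sinh a * sinh b` and the hyperbolic
law of sines `sin (φ/2) * sinh c = sin (2π/3) * sinh b`, the function `c ↦ Sh(c,φ)` is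
strictly increasing on `(0, ∞)`. -/
theorem shortening_strictMono_in_length (φ : ℝ) (hφ : φ ∈ Set.Ioo 0 (2 * π / 3))
    (a b : ℝ → ℝ)
    (ha : ∀ c ∈ Set.Ioi (0 : ℝ), 0 < a c)
    (hb : ∀ c ∈ Set.Ioi (0 : ℝ), 0 < b c)
    (hcos : ∀ c ∈ Set.Ioi (0 : ℝ),
      Real.cosh c = Real.cosh (a c) * Real.cosh (b c)
        + (1 / 2) * Real.sinh (a c) * Real.sinh (b c))
    (hsin : ∀ c ∈ Set.Ioi (0 : ℝ),
      Real.sin (φ / 2) * Real.sinh c = Real.sin (2 * π / 3) * Real.sinh (b c)) :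
    StrictMonoOn (fun c => 2 * c - 2 * b c - a c) (Set.Ioi 0) := by
  obtain ⟨hφ0, hφ2⟩ := hφ
  have hπ := Real.pi_pos
  have hs3 : Real.sin (2 * π / 3) = Real.sin (π / 3) := by
    rw [show (2 * π / 3 : ℝ) = π - π / 3 by ring, Real.sin_pi_sub]
  have hs3pos : 0 < Real.sin (2 * π / 3) := by
    rw [hs3]
    exact Real.sin_pos_of_pos_of_lt_pi (by linarith) (by linarith)
  have hsφpos : 0 < Real.sin (φ / 2) :=
    Real.sin_pos_of_pos_of_lt_pi (by linarith) (by linarith)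
  set k : ℝ := Real.sin (φ / 2) / Real.sin (2 * π / 3) with hkdef
  have hk0 : 0 < k := div_pos hsφpos hs3pos
  have hk1 : k < 1 := by
    rw [hkdef, div_lt_one hs3pos, hs3]
    exact Real.strictMonoOn_sin ⟨by linarith, by linarith⟩ ⟨by linarith, by linarith⟩
      (by linarith)
  set m : ℝ := Real.sqrt (1 - 3 * k ^ 2 / 4) with hmdef
  have hm0 : 0 < m := Real.sqrt_pos.2 (by nlinarith)
  have hm2 : m ^ 2 = 1 - 3 * k ^ 2 / 4 := Real.sq_sqrt (by nlinarith)
  have hmhalf : 1 / 2 < m := by nlinarith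
  -- pointwise identification of b and a
  have hkey : ∀ c ∈ Set.Ioi (0 : ℝ), 2 * c - 2 * b c - a c
      = 2 * c - 2 * Real.arsinh (k * Real.sinh c)
        - Real.log (Real.cosh c + m * Real.sinh c)
        + Real.log (Real.sqrt (1 + (k * Real.sinh c) ^ 2) + k * Real.sinh c / 2) := by
    intro c hc
    have hc0 : (0 : ℝ) < c := hc
    have hu : 0 < Real.sinh c := by rwa [Real.sinh_pos_iff]
    have hv : 0 < Real.cosh c := Real.cosh_pos c
    have hv2 : Real.cosh c ^ 2 = Real.sinh c ^ 2 + 1 := Real.cosh_sq c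
    have hw0 : 0 < Real.sqrt (1 + (k * Real.sinh c) ^ 2) := Real.sqrt_pos.2 (by positivity)
    have hw2 : Real.sqrt (1 + (k * Real.sinh c) ^ 2) ^ 2 = 1 + (k * Real.sinh c) ^ 2 :=
      Real.sq_sqrt (by positivity)
    -- b is forced
    have hsinhb : Real.sinh (b c) = k * Real.sinh c := by
      have h := hsin c hc
      rw [hkdef]
      field_simp
      linarith
    have hbc : b c = Real.arsinh (k * Real.sinh c) := by
      rw [← hsinhb, Real.arsinh_sinh]
    have hcoshb : Real.cosh (b c) = Real.sqrt (1 + (k * Real.sinh c) ^ 2) := by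
      rw [hbc, Real.cosh_arsinh]
    -- the candidate value for a
    have hN0 : 0 < Real.cosh c + m * Real.sinh c := by positivity
    have hP0 : 0 < Real.sqrt (1 + (k * Real.sinh c) ^ 2) + k * Real.sinh c / 2 := by positivity
    have hwltv : Real.sqrt (1 + (k * Real.sinh c) ^ 2) < Real.cosh c := by
      calc Real.sqrt (1 + (k * Real.sinh c) ^ 2) < Real.sqrt (Real.cosh c ^ 2) := by
            apply Real.sqrt_lt_sqrt (by positivity)
            nlinarith [hv2, mul_pos (show (0:ℝ) < 1 - k ^ 2 by nlinarith) (mul_pos hu hu)]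
        _ = Real.cosh c := Real.sqrt_sq hv.le
    have hPltN : Real.sqrt (1 + (k * Real.sinh c) ^ 2) + k * Real.sinh c / 2
        < Real.cosh c + m * Real.sinh c := by
      nlinarith [mul_pos (show (0:ℝ) < m - k / 2 by linarith) hu]
    have hX0 : 0 < (Real.cosh c + m * Real.sinh c)
        / (Real.sqrt (1 + (k * Real.sinh c) ^ 2) + k * Real.sinh c / 2) := div_pos hN0 hP0
    set A : ℝ := Real.log ((Real.cosh c + m * Real.sinh c)
      / (Real.sqrt (1 + (k * Real.sinh c) ^ 2) + k * Real.sinh c / 2)) with hAdef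
    have hA0 : 0 < A := Real.log_pos ((one_lt_div hP0).2 hPltN)
    have hlawA : Real.cosh c = Real.cosh A * Real.cosh (b c)
        + (1 / 2) * Real.sinh A * Real.sinh (b c) := by
      rw [hcoshb, hsinhb, hAdef]
      exact (sh_law_aux k m (Real.sinh c) (Real.cosh c)
        (Real.sqrt (1 + (k * Real.sinh c) ^ 2)) hv2 hw2 hm2 hN0 hP0).symm
    -- injectivity of the law in a
    have hmono : StrictMonoOn (fun x : ℝ => Real.cosh x * Real.cosh (b c)
        + (1 / 2) * Real.sinh x * Real.sinh (b c)) (Set.Ici 0) := by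
      intro x hx y hy hxy
      have h1 : Real.cosh x < Real.cosh y := by
        rw [Real.cosh_lt_cosh, abs_of_nonneg hx, abs_of_nonneg hy]
        exact hxy
      have h2 : Real.sinh x < Real.sinh y := Real.sinh_lt_sinh.2 hxy
      have hcb : 0 < Real.cosh (b c) := Real.cosh_pos _
      have hsb : 0 < Real.sinh (b c) := by rw [hsinhb]; positivity
      dsimp only
      nlinarith [mul_lt_mul_of_pos_right h1 hcb, mul_lt_mul_of_pos_right h2 hsb]
    have haA : a c = A := by
      apply hmono.injOn (Set.mem_Ici.2 (ha c hc).le) (Set.mem_Ici.2 hA0.le)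
      dsimp only
      linarith [hcos c hc, hlawA]
    rw [hbc, haA, hAdef, Real.log_div hN0.ne' hP0.ne']
    ring
  intro x hx y hy hxy
  have e1 := hkey x hx
  have e2 := hkey y hy
  simp only at e1 e2 ⊢
  rw [e1, e2]
  exact sh_strictMono_aux k m hk0 hk1 hm0 hm2 hx hy hxy
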